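/- Let X ⊆ ℝ^n be a convex set, let φ : ℝ^n → ℝ be differentiable, let M be a real m×n matrix, h ∈ ℝ^n, η ≥ 0, x₀ ∈ ℝ^n, and y ∈ ℝ^m. Suppose x⁺ ∈ X minimizes the function x ↦ η⟨x, h⟩ + D_φ(x, x₀) over X. Then for every u ∈ X: η⟨Mu, y⟩ ≥ η⟨x⁺, h⟩ + D_φ(x⁺, x₀) + η⟨u, Mᵀy − h⟩ + D_φ(u, x⁺) − D_φ(u, x₀). -/

import Mathlib

/-- The Bregman divergence `D_f(a, b) = f a - f b - ⟨∇f(b), a - b⟩`. -/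
noncomputable def breg {d : ℕ} (f : (Fin d → ℝ) → ℝ) (a b : Fin d → ℝ) : ℝ :=
  f a - f b - fderiv ℝ f b (a - b)

/-- Primal-side prox inequality: if `x⁺ ∈ X` minimizes `x ↦ η⟨x, h⟩ + D_φ(x, x₀)` over the
convex set `X`, then for every `u ∈ X`,
`η⟨Mu, y⟩ ≥ η⟨x⁺, h⟩ + D_φ(x⁺, x₀) + η⟨u, Mᵀy - h⟩ + D_φ(u, x⁺) - D_φ(u, x₀)`. -/
theorem stmt_4 {m n : ℕ} (X : Set (Fin n → ℝ)) (hX : Convex ℝ X)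
    (φ : (Fin n → ℝ) → ℝ) (hφ : Differentiable ℝ φ)
    (M : Matrix (Fin m) (Fin n) ℝ) (h : Fin n → ℝ) (η : ℝ) (hη : 0 ≤ η)
    (x₀ : Fin n → ℝ) (y : Fin m → ℝ) (xplus : Fin n → ℝ) (hxplus : xplus ∈ X)
    (hmin : IsMinOn (fun x => η * (∑ j, x j * h j) + breg φ x x₀) X xplus) :
    ∀ u ∈ X,
      η * (∑ i, M.mulVec u i * y i) ≥
        η * (∑ j, xplus j * h j) + breg φ xplus x₀ +
          η * (∑ j, u j * (M.transpose.mulVec y j - h j)) +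
          breg φ u xplus - breg φ u x₀ := by
  intro u hu
  set A := fderiv ℝ φ x₀ with hA
  set B := fderiv ℝ φ xplus with hB
  -- the linear functional x ↦ ∑ j, x j * h j
  set ℓ : (Fin n → ℝ) →L[ℝ] ℝ := ∑ j, h j • ContinuousLinearMap.proj j with hℓ
  have hℓapp : ∀ v : Fin n → ℝ, ℓ v = ∑ j, v j * h j := by
    intro v
    simp [hℓ, ContinuousLinearMap.sum_apply, mul_comm]
  -- derivative of the objective at xplus
  have hF : HasFDerivAt (fun x => η * (∑ j, x j * h j) + breg φ x x₀)
      (η • ℓ + (B - A)) xplus := by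
    have h1 : HasFDerivAt (fun x : Fin n → ℝ => η * (∑ j, x j * h j)) (η • ℓ) xplus := by
      have := (ℓ.hasFDerivAt (x := xplus)).const_smul η
      refine this.congr_of_eventuallyEq (Filter.Eventually.of_forall fun x => ?_)
      simp [hℓapp, smul_eq_mul]
    have h2 : HasFDerivAt (fun x => breg φ x x₀) (B - A) xplus := by
      have hφ' : HasFDerivAt φ B xplus := (hφ xplus).hasFDerivAt
      have hAh : HasFDerivAt (fun x : Fin n → ℝ => A (x - x₀)) A xplus := by
        have : HasFDerivAt (fun x : Fin n → ℝ => A x - A x₀) A xplus :=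
          (A.hasFDerivAt).sub_const (A x₀)
        simpa [map_sub] using this
      have := (hφ'.sub_const (φ x₀)).sub hAh
      refine this.congr_of_eventuallyEq (Filter.Eventually.of_forall fun x => ?_)
      simp [breg, hA]
    exact h1.add h2
  have htc : u - xplus ∈ posTangentConeAt X xplus :=
    sub_mem_posTangentConeAt_of_segment_subset (hX.segment_subset hxplus hu)
  have hkey : 0 ≤ (η • ℓ + (B - A)) (u - xplus) :=
    hmin.localize.hasFDerivWithinAt_nonneg (hF.hasFDerivWithinAt) htc
  have hkey' : 0 ≤ η * (∑ j, (u j - xplus j) * h j) + (B (u - xplus) - A (u - xplus)) := by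
    simpa [hℓapp, smul_eq_mul] using hkey
  -- ⟨Mu, y⟩ = ⟨u, Mᵀ y⟩
  have hMT : (∑ i, M.mulVec u i * y i) = ∑ j, u j * M.transpose.mulVec y j := by
    simp only [Matrix.mulVec, dotProduct, Matrix.transpose_apply, Finset.sum_mul,
      Finset.mul_sum]
    rw [Finset.sum_comm]
    apply Finset.sum_congr rfl; intro j _
    apply Finset.sum_congr rfl; intro i _
    ring
  have hsub1 : ∑ j, (u j - xplus j) * h j = (∑ j, u j * h j) - ∑ j, xplus j * h j := by
    rw [← Finset.sum_sub_distrib]; apply Finset.sum_congr rfl; intros; ring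
  have hsub2 : ∑ j, u j * (M.transpose.mulVec y j - h j)
      = (∑ j, u j * M.transpose.mulVec y j) - ∑ j, u j * h j := by
    rw [← Finset.sum_sub_distrib]; apply Finset.sum_congr rfl; intros; ring
  have hAsplit : A (u - x₀) = A (u - xplus) + A (xplus - x₀) := by
    rw [← map_add]; congr 1; abel
  simp only [breg, ← hA, ← hB]
  rw [hMT, hsub2, hAsplit]
  rw [hsub1] at hkey'
  linarith [hkey']
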